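/- arXiv:2111.07920 — 5 statements merged into one kernel-verified Lean document; each statement's English description precedes it below -/
import Mathlib

section
/- Every positive solution u of the ODE u''/(1+u'²) = 1/u on an open interval is of the form u(x) = (1/a)·cosh(a x + b) for some constants a ≠ 0 and b. -/
open Real Set

/-- every positive C² solution of `u''·u = 1 + u'²` on an open interval
is a catenary `u(x) = (1/a)·cosh(a x + b)` for some `a ≠ 0` and `b`. -/
theorem stmt3 (I : Set ℝ) (hI : IsOpen I) (hconn : IsPreconnected I) (hne : I.Nonempty)
    (u : ℝ → ℝ) (hreg : ContDiffOn ℝ 2 u I) (hpos : ∀ x ∈ I, 0 < u x)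
    (hode : ∀ x ∈ I, deriv (deriv u) x * u x = 1 + (deriv u x) ^ 2) :
    ∃ a b : ℝ, a ≠ 0 ∧ ∀ x ∈ I, u x = (1 / a) * Real.cosh (a * x + b) := by
  obtain ⟨x₀, hx₀⟩ := hne
  have hconv : Convex ℝ I := hconn.ordConnected.convex
  -- first derivative
  have hu1 : ∀ x ∈ I, HasDerivAt u (deriv u x) x := by
    intro x hx
    have h := (hreg.contDiffAt (hI.mem_nhds hx)).differentiableAt (by norm_num)
    exact h.hasDerivAt
  -- deriv u is C¹ on I
  have hder : ContDiffOn ℝ 1 (deriv u) I := hreg.deriv_of_isOpen hI (by norm_num)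
  have hu2 : ∀ x ∈ I, HasDerivAt (deriv u) (deriv (deriv u) x) x := by
    intro x hx
    have h := (hder.contDiffAt (hI.mem_nhds hx)).differentiableAt (by norm_num)
    exact h.hasDerivAt
  -- energy function
  set g : ℝ → ℝ := fun x => (1 + (deriv u x) ^ 2) / (u x) ^ 2 with hg
  have hgderiv : ∀ x ∈ I, HasDerivAt g 0 x := by
    intro x hx
    have hux := hpos x hx
    have h1 : HasDerivAt (fun x => 1 + (deriv u x) ^ 2)
        (2 * deriv u x * deriv (deriv u) x) x := by
      have := ((hu2 x hx).pow 2)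
      simpa using (this.const_add 1)
    have h2 : HasDerivAt (fun x => (u x) ^ 2) (2 * u x * deriv u x) x := by
      simpa using (hu1 x hx).fun_pow 2
    have h3 := h1.div h2 (by positivity)
    convert h3 using 1
    · rfl
    · rfl
    · rfl
    rw [eq_comm, div_eq_zero_iff]
    left
    linear_combination (2 * deriv u x * u x) * (hode x hx)
  have hgconst : ∀ x ∈ I, g x = g x₀ := by
    intro x hx
    have : DifferentiableOn ℝ g I := fun y hy => ((hgderiv y hy).differentiableAt).differentiableWithinAt
    apply hconv.is_const_of_fderivWithin_eq_zero this _ hx hx₀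
    intro y hy
    have : fderivWithin ℝ g I y = fderiv ℝ g y := fderivWithin_of_isOpen hI hy
    rw [this, (hgderiv y hy).hasFDerivAt.fderiv]
    ext; simp
  -- g x₀ > 0
  set c : ℝ := Real.sqrt (g x₀) with hc
  have hgx₀pos : 0 < g x₀ := by
    have := hpos x₀ hx₀; positivity
  have hcpos : 0 < c := Real.sqrt_pos.2 hgx₀pos
  -- sqrt(1 + u'²) = c * u
  have hkey : ∀ x ∈ I, Real.sqrt (1 + (deriv u x) ^ 2) = c * u x := by
    intro x hx
    have hux := hpos x hx
    have hgx : (1 + (deriv u x) ^ 2) = g x₀ * (u x) ^ 2 := by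
      rw [← hgconst x hx, hg]
      field_simp
    rw [hgx, hc]
    rw [show Real.sqrt (g x₀) * u x = Real.sqrt (g x₀) * Real.sqrt ((u x)^2) by
      rw [Real.sqrt_sq hux.le]]
    rw [← Real.sqrt_mul hgx₀pos.le]
  -- w = arsinh (u') - c x has derivative 0
  set w : ℝ → ℝ := fun x => Real.arsinh (deriv u x) - c * x with hw
  have hwderiv : ∀ x ∈ I, HasDerivAt w 0 x := by
    intro x hx
    have hux := hpos x hx
    have h1 : HasDerivAt (fun x => Real.arsinh (deriv u x))
        ((Real.sqrt (1 + (deriv u x) ^ 2))⁻¹ * deriv (deriv u) x) x :=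
      (Real.hasDerivAt_arsinh _).comp x (hu2 x hx)
    have h2 : HasDerivAt (fun x => c * x) c x := by
      simpa using (hasDerivAt_id x).const_mul c
    have h3 := h1.sub h2
    convert h3 using 1
    · rfl
    · rfl
    · rfl
    rw [hkey x hx]
    have hode' := hode x hx
    have h4 : deriv (deriv u) x = (1 + (deriv u x)^2) / u x := by
      field_simp; linarith [hode']
    rw [h4]
    have h5 : (1 + (deriv u x)^2) = (c * u x)^2 := by
      rw [← hkey x hx, Real.sq_sqrt (by positivity : (0:ℝ) ≤ 1 + (deriv u x)^2)]
    rw [h5]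
    field_simp
    ring
  -- w constant
  have hwconst : ∀ x ∈ I, w x = w x₀ := by
    intro x hx
    have : DifferentiableOn ℝ w I := fun y hy => ((hwderiv y hy).differentiableAt).differentiableWithinAt
    apply hconv.is_const_of_fderivWithin_eq_zero this _ hx hx₀
    intro y hy
    have h : fderivWithin ℝ w I y = fderiv ℝ w y := fderivWithin_of_isOpen hI hy
    rw [h, (hwderiv y hy).hasFDerivAt.fderiv]
    ext; simp
  refine ⟨c, w x₀, hcpos.ne', fun x hx => ?_⟩
  have harsinh : Real.arsinh (deriv u x) = c * x + w x₀ := by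
    have h := hwconst x hx
    have hwx : w x = Real.arsinh (deriv u x) - c * x := rfl
    rw [hwx] at h
    linarith
  have hsinh : deriv u x = Real.sinh (c * x + w x₀) := by
    rw [← harsinh, Real.sinh_arsinh]
  -- u x = sqrt(1+u'²)/c = cosh(...)/c
  have hcosh : Real.sqrt (1 + (deriv u x) ^ 2) = Real.cosh (c * x + w x₀) := by
    rw [hsinh]
    rw [show (1 : ℝ) + Real.sinh (c * x + w x₀) ^ 2 = Real.cosh (c * x + w x₀) ^ 2 by
      rw [Real.cosh_sq]; ring]
    exact Real.sqrt_sq (Real.cosh_pos _).le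
  have := hkey x hx
  rw [hcosh] at this
  field_simp
  linarith [this]
end

section
/- If u : Ω → ℝ is a positive C² function on a bounded open domain Ω satisfying the singular minimal surface equation and u extends continuously to the closure of Ω, then sup over the closure of Ω of u is attained on the boundary ∂Ω; equivalently, the graph of u lies below the plane z = max_{∂Ω} u. -/
open Set Filter Topology

lemma second_deriv_test_max (f f' : ℝ → ℝ) (s : Set ℝ) (hs : s ∈ 𝓝 (0:ℝ))
    (hd : ∀ t ∈ s, HasDerivAt f (f' t) t) (h0 : f' 0 = 0) {c : ℝ}
    (hd2 : HasDerivAt f' c 0) (hc : 0 < c)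
    (hmax : ∀ᶠ t in 𝓝 (0:ℝ), f t ≤ f 0) : False := by
  have hslope : Tendsto (slope f' 0) (𝓝[≠] 0) (𝓝 c) :=
    hasDerivAt_iff_tendsto_slope.1 hd2
  have ev1 : ∀ᶠ t in 𝓝[>] (0:ℝ), 0 < f' t := by
    have h1 : Tendsto (slope f' 0) (𝓝[>] 0) (𝓝 c) :=
      hslope.mono_left (nhdsWithin_mono _ (fun t ht => ne_of_gt ht))
    have h2 : ∀ᶠ t in 𝓝[>] (0:ℝ), 0 < slope f' 0 t := h1.eventually (eventually_gt_nhds hc)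
    filter_upwards [h2, self_mem_nhdsWithin] with t ht ht0
    have hsl : slope f' 0 t = f' t / t := by simp [slope, h0, div_eq_inv_mul]
    rw [hsl] at ht
    have := mul_pos ht ht0
    rwa [div_mul_cancel₀ _ (ne_of_gt ht0)] at this
  have ev1' : ∀ᶠ t in 𝓝 (0:ℝ), t ∈ Ioi (0:ℝ) → 0 < f' t :=
    eventually_nhdsWithin_iff.1 ev1
  obtain ⟨δ, hδ, hball⟩ := Metric.eventually_nhds_iff.1 (ev1'.and (hmax.and (show ∀ᶠ t in 𝓝 (0:ℝ), t ∈ s from hs)))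
  set ε := δ/2 with hε
  have hεpos : 0 < ε := by positivity
  have hIcc : Icc (0:ℝ) ε ⊆ s := by
    intro t ht
    have : dist t 0 < δ := by
      rw [Real.dist_eq, sub_zero, abs_of_nonneg ht.1]
      linarith [ht.2]
    exact (hball this).2.2
  have hmono : StrictMonoOn f (Icc 0 ε) := by
    apply strictMonoOn_of_deriv_pos (convex_Icc _ _)
    · exact fun t ht => (hd t (hIcc ht)).continuousAt.continuousWithinAt
    · intro t ht
      rw [interior_Icc] at ht
      rw [(hd t (hIcc (Ioo_subset_Icc_self ht))).deriv]
      have : dist t 0 < δ := by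
        rw [Real.dist_eq, sub_zero, abs_of_nonneg ht.1.le]
        linarith [ht.2]
      exact (hball this).1 ht.1
  have h1 : f 0 < f ε := hmono ⟨le_rfl, hεpos.le⟩ ⟨hεpos.le, le_rfl⟩ hεpos
  have h2 : f ε ≤ f 0 := by
    have : dist ε 0 < δ := by
      rw [Real.dist_eq, sub_zero, abs_of_nonneg hεpos.le]; linarith
    exact (hball this).2.1
  linarith

lemma aux_dir (Ω : Set (ℝ × ℝ)) (hΩ : IsOpen Ω) (u : ℝ × ℝ → ℝ)
    (hreg : ContDiffOn ℝ 2 u Ω) (p : ℝ × ℝ) (hp : p ∈ Ω) (e : ℝ × ℝ)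
    (hmax : ∀ q ∈ Ω, u q ≤ u p)
    (h2 : 0 < fderiv ℝ (fun q => fderiv ℝ u q e) p e) : False := by
  set L : ℝ → ℝ × ℝ := fun t => p + t • e with hL
  have hL0 : L 0 = p := by simp [hL]
  have hLd : ∀ t : ℝ, HasDerivAt L e t := fun t => by
    simpa [hL] using ((hasDerivAt_id t).smul_const e).const_add p
  have hLcont : Continuous L := continuous_const.add (continuous_id.smul continuous_const)
  have hs : L ⁻¹' Ω ∈ 𝓝 (0:ℝ) :=
    hLcont.continuousAt.preimage_mem_nhds (hΩ.mem_nhds (hL0 ▸ hp))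
  have hd : ∀ t ∈ L ⁻¹' Ω, HasDerivAt (u ∘ L) (fderiv ℝ u (L t) e) t := fun t ht =>
    (((hreg.contDiffAt (hΩ.mem_nhds ht)).differentiableAt two_ne_zero).hasFDerivAt).comp_hasDerivAt
      t (hLd t)
  have hlocmax : IsLocalMax u p := by
    filter_upwards [hΩ.mem_nhds hp] with q hq using hmax q hq
  have hf0 : fderiv ℝ u p = 0 := hlocmax.fderiv_eq_zero
  have h0 : fderiv ℝ u (L 0) e = 0 := by rw [hL0, hf0]; rfl
  have hφ : DifferentiableAt ℝ (fun q => fderiv ℝ u q e) p := by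
    have h1 : ContDiffOn ℝ 1 (fderiv ℝ u) Ω := hreg.fderiv_of_isOpen hΩ (by norm_num)
    have hdf : DifferentiableAt ℝ (fderiv ℝ u) p :=
      (h1.contDiffAt (hΩ.mem_nhds hp)).differentiableAt one_ne_zero
    exact (ContinuousLinearMap.apply ℝ ℝ e).differentiable.differentiableAt.comp p hdf
  have hd2 : HasDerivAt (fun t => fderiv ℝ u (L t) e)
      (fderiv ℝ (fun q => fderiv ℝ u q e) p e) 0 := by
    have hφd : HasFDerivAt (fun q => fderiv ℝ u q e)
        (fderiv ℝ (fun q => fderiv ℝ u q e) p) (L 0) := by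
      rw [hL0]; exact hφ.hasFDerivAt
    exact hφd.comp_hasDerivAt 0 (hLd 0)
  have hmax' : ∀ᶠ t in 𝓝 (0:ℝ), (u ∘ L) t ≤ (u ∘ L) 0 := by
    filter_upwards [hs] with t ht
    rw [Function.comp_apply, Function.comp_apply, hL0]
    exact hmax _ ht
  exact second_deriv_test_max (u ∘ L) (fun t => fderiv ℝ u (L t) e) _ hs hd h0 hd2 h2 hmax'

noncomputable def pdx (u : ℝ × ℝ → ℝ) (p : ℝ × ℝ) : ℝ := fderiv ℝ u p (1, 0)
noncomputable def pdy (u : ℝ × ℝ → ℝ) (p : ℝ × ℝ) : ℝ := fderiv ℝ u p (0, 1)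

/-- a positive solution of the singular minimal surface equation on a
bounded open domain, continuous up to the closure, attains its maximum over the
closure at a boundary point: the graph lies below the plane `z = max_{∂Ω} u`. -/
theorem stmt5 (Ω : Set (ℝ × ℝ)) (hΩ : IsOpen Ω) (hbd : Bornology.IsBounded Ω)
    (hne : Ω.Nonempty) (u : ℝ × ℝ → ℝ)
    (hcont : ContinuousOn u (closure Ω))
    (hreg : ContDiffOn ℝ 2 u Ω) (hpos : ∀ p ∈ Ω, 0 < u p)
    (hpde : ∀ p ∈ Ω,
      (1 + (pdy u p) ^ 2) * pdx (pdx u) p - 2 * pdx u p * pdy u p * pdy (pdx u) p +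
          (1 + (pdx u p) ^ 2) * pdy (pdy u) p
        = (1 + (pdx u p) ^ 2 + (pdy u p) ^ 2) / u p) :
    ∃ p ∈ frontier Ω, ∀ q ∈ closure Ω, u q ≤ u p := by
  obtain ⟨p, hpcl, hpmax⟩ :=
    hbd.isCompact_closure.exists_isMaxOn hne.closure hcont
  by_cases hp : p ∈ Ω
  · exfalso
    have hmaxΩ : ∀ q ∈ Ω, u q ≤ u p := fun q hq => hpmax (subset_closure hq)
    have hlocmax : IsLocalMax u p := by
      filter_upwards [hΩ.mem_nhds hp] with q hq using hmaxΩ q hq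
    have hf0 : fderiv ℝ u p = 0 := hlocmax.fderiv_eq_zero
    have hx : pdx u p = 0 := by rw [pdx, hf0]; rfl
    have hy : pdy u p = 0 := by rw [pdy, hf0]; rfl
    have hpde' := hpde p hp
    rw [hx, hy] at hpde'
    have hup : 0 < u p := hpos p hp
    have hpos' : 0 < pdx (pdx u) p + pdy (pdy u) p := by
      have h1 : (0:ℝ) < 1 / u p := by positivity
      nlinarith [hpde']
    rcases lt_or_ge 0 (pdx (pdx u) p) with hA | hA
    · exact aux_dir Ω hΩ u hreg p hp (1, 0) hmaxΩ hA
    · have hB : 0 < pdy (pdy u) p := by linarith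
      exact aux_dir Ω hΩ u hreg p hp (0, 1) hmaxΩ hB
  · exact ⟨p, by rw [hΩ.frontier_eq]; exact ⟨hpcl, hp⟩, fun q hq => hpmax hq⟩
end

section
/- Suppose a surface of revolution about the z-axis, parametrized by X(r,θ) = (r cos θ, r sin θ, u(r)), satisfies the singular minimal surface equation H = ⟨N, v⟩/⟨X, v⟩ for a unit vector v = (a₁, a₂, a₃). Then either a₁ = a₂ = 0 (the gravity direction is parallel to the rotation axis) and u satisfies u''/(1+u'²) = 1/u − u'/r, or a₃ = 0 (the gravity direction is orthogonal to the rotation axis) and u satisfies u''/(1+u'²) = −2u'/r. -/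
lemma key_stmt12 (r w w' uu a₁ a₂ a₃ : ℝ) (hr : 0 < r) (hu : 0 < uu)
    (ha : a₁ ≠ 0 ∨ a₂ ≠ 0)
    (h : ∀ θ : ℝ,
      (w * (1 + w ^ 2) + r * w') / (r * (Real.sqrt (1 + w ^ 2)) ^ 3)
        = (-a₁ * w * Real.cos θ - a₂ * w * Real.sin θ + a₃) /
            (Real.sqrt (1 + w ^ 2) * (a₁ * r * Real.cos θ + a₂ * r * Real.sin θ + a₃ * uu))) :
    r * w' = -2 * w * (1 + w ^ 2) ∧ (a₃ ≠ 0 → w * uu = -r) := by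
  have hs1 : (0:ℝ) < 1 + w ^ 2 := by positivity
  set s := Real.sqrt (1 + w ^ 2) with hsdef
  have hs : 0 < s := Real.sqrt_pos.2 hs1
  have hs2 : s ^ 2 = 1 + w ^ 2 := Real.sq_sqrt hs1.le
  by_cases hnum : w * (1 + w ^ 2) + r * w' = 0
  · -- mean curvature is zero
    have hprod : ∀ θ : ℝ,
        (-a₁ * w * Real.cos θ - a₂ * w * Real.sin θ + a₃) *
          (a₁ * r * Real.cos θ + a₂ * r * Real.sin θ + a₃ * uu) = 0 := by
      intro θ
      have h0 := h θ
      rw [hnum, zero_div] at h0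
      rcases div_eq_zero_iff.mp h0.symm with hN | hD
      · rw [hN, zero_mul]
      · rcases mul_eq_zero.mp hD with h' | h'
        · exact absurd h' hs.ne'
        · rw [h', mul_zero]
    have e1 := hprod 0
    have e2 := hprod Real.pi
    have e3 := hprod (Real.pi / 2)
    have e4 := hprod (Real.pi / 2 + Real.pi)
    have e5 := hprod (Real.pi / 4)
    have e7 := hprod (Real.pi / 4 + Real.pi)
    rw [Real.cos_zero, Real.sin_zero] at e1
    rw [Real.cos_pi, Real.sin_pi] at e2
    rw [Real.cos_pi_div_two, Real.sin_pi_div_two] at e3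
    rw [Real.cos_add_pi, Real.sin_add_pi, Real.cos_pi_div_two, Real.sin_pi_div_two] at e4
    rw [Real.cos_pi_div_four, Real.sin_pi_div_four] at e5
    rw [Real.cos_add_pi, Real.sin_add_pi, Real.cos_pi_div_four, Real.sin_pi_div_four] at e7
    have hk : Real.sqrt 2 ^ 2 = 2 := Real.sq_sqrt (by norm_num)
    have hd : a₁ * a₂ * w * r = 0 := by
      linear_combination (e1 + e2 + e3 + e4) / 4 - (e5 + e7) / 2 - ((a₁ + a₂) ^ 2 * w * r / 4) * hk
    have h3u : a₃ ^ 2 * uu = 0 := by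
      rcases ha with ha1 | ha2
      · have h' : a₁ ^ 2 * (a₃ ^ 2 * uu) = 0 := by
          linear_combination a₁ ^ 2 * ((e3 + e4) / 2) + a₁ * a₂ * hd
        rcases mul_eq_zero.mp h' with h'' | h''
        · exact absurd h'' (pow_ne_zero 2 ha1)
        · exact h''
      · have h' : a₂ ^ 2 * (a₃ ^ 2 * uu) = 0 := by
          linear_combination a₂ ^ 2 * ((e1 + e2) / 2) + a₁ * a₂ * hd
        rcases mul_eq_zero.mp h' with h'' | h''
        · exact absurd h'' (pow_ne_zero 2 ha2)
        · exact h''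
    have hw : w = 0 := by
      rcases ha with ha1 | ha2
      · have h' : a₁ ^ 2 * r * w = 0 := by linear_combination -((e1 + e2) / 2) + h3u
        rcases mul_eq_zero.mp h' with h'' | h''
        · exact absurd h'' (mul_ne_zero (pow_ne_zero 2 ha1) hr.ne')
        · exact h''
      · have h' : a₂ ^ 2 * r * w = 0 := by linear_combination -((e3 + e4) / 2) + h3u
        rcases mul_eq_zero.mp h' with h'' | h''
        · exact absurd h'' (mul_ne_zero (pow_ne_zero 2 ha2) hr.ne')
        · exact h''
    have ha3 : a₃ = 0 := by
      have h' : a₃ ^ 2 = 0 := by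
        rcases mul_eq_zero.mp h3u with h'' | h''
        · exact h''
        · exact absurd h'' hu.ne'
      exact pow_eq_zero_iff two_ne_zero |>.mp h'
    constructor
    · rw [hw]; rw [hw] at hnum; linear_combination hnum
    · intro hc; exact absurd ha3 hc
  · -- mean curvature nonzero
    have hden : r * s ^ 3 ≠ 0 := by positivity
    have hH : (w * (1 + w ^ 2) + r * w') / (r * s ^ 3) ≠ 0 := div_ne_zero hnum hden
    have hD : ∀ θ : ℝ, (a₁ * r * Real.cos θ + a₂ * r * Real.sin θ + a₃ * uu) ≠ 0 := by
      intro θ hD0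
      apply hH
      rw [h θ, hD0, mul_zero, div_zero]
    have hE : ∀ θ : ℝ,
        (w * (1 + w ^ 2) + r * w') * (a₁ * r * Real.cos θ + a₂ * r * Real.sin θ + a₃ * uu)
          = (-a₁ * w * Real.cos θ - a₂ * w * Real.sin θ + a₃) * (r * (1 + w ^ 2)) := by
      intro θ
      have h0 := h θ
      rw [div_eq_div_iff hden (mul_ne_zero hs.ne' (hD θ))] at h0
      have h1 : s * ((w * (1 + w ^ 2) + r * w') *
            (a₁ * r * Real.cos θ + a₂ * r * Real.sin θ + a₃ * uu))
          = s * ((-a₁ * w * Real.cos θ - a₂ * w * Real.sin θ + a₃) * (r * (1 + w ^ 2))) := by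
        linear_combination h0 + ((-a₁ * w * Real.cos θ - a₂ * w * Real.sin θ + a₃) * r * s) * hs2
      exact mul_left_cancel₀ hs.ne' h1
    have E1 := hE 0
    have E2 := hE Real.pi
    have E3 := hE (Real.pi / 2)
    have E4 := hE (Real.pi / 2 + Real.pi)
    rw [Real.cos_zero, Real.sin_zero] at E1
    rw [Real.cos_pi, Real.sin_pi] at E2
    rw [Real.cos_pi_div_two, Real.sin_pi_div_two] at E3
    rw [Real.cos_add_pi, Real.sin_add_pi, Real.cos_pi_div_two, Real.sin_pi_div_two] at E4
    have main : r * w' = -2 * w * (1 + w ^ 2) := by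
      rcases ha with ha1 | ha2
      · have h' : a₁ * (2 * r) * (2 * w * (1 + w ^ 2) + r * w') = 0 := by
          linear_combination E1 - E2
        rcases mul_eq_zero.mp h' with h'' | h''
        · rcases mul_eq_zero.mp h'' with h3 | h3
          · exact absurd h3 ha1
          · norm_num at h3; exact absurd h3 hr.ne'
        · linarith [h'']
      · have h' : a₂ * (2 * r) * (2 * w * (1 + w ^ 2) + r * w') = 0 := by
          linear_combination E3 - E4
        rcases mul_eq_zero.mp h' with h'' | h''
        · rcases mul_eq_zero.mp h'' with h3 | h3
          · exact absurd h3 ha2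
          · norm_num at h3; exact absurd h3 hr.ne'
        · linarith [h'']
    refine ⟨main, ?_⟩
    intro ha3
    have h' : a₃ * (2 : ℝ) * ((w * (1 + w ^ 2) + r * w') * uu - r * (1 + w ^ 2)) = 0 := by
      linear_combination E1 + E2
    have h'' : (w * (1 + w ^ 2) + r * w') * uu - r * (1 + w ^ 2) = 0 := by
      rcases mul_eq_zero.mp h' with h3 | h3
      · rcases mul_eq_zero.mp h3 with h4 | h4
        · exact absurd h4 ha3
        · norm_num at h4
      · exact h3
    have h5 : (1 + w ^ 2) * (w * uu + r) = 0 := by linear_combination uu * main - h''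
    rcases mul_eq_zero.mp h5 with h6 | h6
    · exact absurd h6 hs1.ne'
    · linarith

/-- if the rotational surface `X(r,θ) = (r cos θ, r sin θ, u(r))`
satisfies the singular minimal surface equation `H = ⟨N,v⟩/⟨X,v⟩` for a unit vector
`v = (a₁,a₂,a₃)` — i.e. `H·⟨X,v⟩ = ⟨N,v⟩` holds for all `θ`, where
`H = (u'(1+u'²)+ru'')/(r(1+u'²)^{3/2})` and `N = (−u'cosθ, −u'sinθ, 1)/√(1+u'²)` —
then either `a₁ = a₂ = 0` and `u''/(1+u'²) = 1/u − u'/r`, or `a₃ = 0` and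
`u''/(1+u'²) = −2u'/r`. -/
theorem stmt12 (I : Set ℝ) (hI : IsOpen I) (hne : I.Nonempty) (hIpos : I ⊆ Set.Ioi 0)
    (u : ℝ → ℝ) (hreg : ContDiffOn ℝ 2 u I) (hpos : ∀ r ∈ I, 0 < u r)
    (a₁ a₂ a₃ : ℝ) (hunit : a₁ ^ 2 + a₂ ^ 2 + a₃ ^ 2 = 1)
    (hsms : ∀ r ∈ I, ∀ θ : ℝ,
      (deriv u r * (1 + (deriv u r) ^ 2) + r * deriv (deriv u) r) /
          (r * (Real.sqrt (1 + (deriv u r) ^ 2)) ^ 3)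
        = (-a₁ * deriv u r * Real.cos θ - a₂ * deriv u r * Real.sin θ + a₃) /
            (Real.sqrt (1 + (deriv u r) ^ 2) *
              (a₁ * r * Real.cos θ + a₂ * r * Real.sin θ + a₃ * u r))) :
    (a₁ = 0 ∧ a₂ = 0 ∧ ∀ r ∈ I,
        deriv (deriv u) r / (1 + (deriv u r) ^ 2) = 1 / u r - deriv u r / r) ∨
    (a₃ = 0 ∧ ∀ r ∈ I,
        deriv (deriv u) r / (1 + (deriv u r) ^ 2) = -2 * deriv u r / r) := by
  by_cases h12 : a₁ = 0 ∧ a₂ = 0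
  · left
    obtain ⟨ha1, ha2⟩ := h12
    have ha3 : a₃ ≠ 0 := by
      intro h0; rw [ha1, ha2, h0] at hunit; norm_num at hunit
    refine ⟨ha1, ha2, ?_⟩
    intro r hr
    have hrpos : 0 < r := hIpos hr
    have hu : 0 < u r := hpos r hr
    set w := deriv u r with hw
    set w' := deriv (deriv u) r with hw'
    have hs1 : (0:ℝ) < 1 + w ^ 2 := by positivity
    set s := Real.sqrt (1 + w ^ 2) with hsdef
    have hs : 0 < s := Real.sqrt_pos.2 hs1
    have hs2 : s ^ 2 = 1 + w ^ 2 := Real.sq_sqrt hs1.le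
    have h0 := hsms r hr 0
    rw [ha1, ha2, Real.cos_zero, Real.sin_zero] at h0
    have h0' : (w * (1 + w ^ 2) + r * w') / (r * s ^ 3) = a₃ / (a₃ * (s * u r)) := by
      rw [h0]; ring_nf; rw [hsdef, hw]; ring
    have hden1 : r * s ^ 3 ≠ 0 := by positivity
    have hden2 : a₃ * (s * u r) ≠ 0 := mul_ne_zero ha3 (by positivity)
    rw [div_eq_div_iff hden1 hden2] at h0'
    have hnu : (a₃ * s) * ((w * (1 + w ^ 2) + r * w') * u r) = (a₃ * s) * (r * (1 + w ^ 2)) := by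
      linear_combination h0' + (a₃ * r * s) * hs2
    have hnu2 := mul_left_cancel₀ (mul_ne_zero ha3 hs.ne') hnu
    field_simp
    linear_combination hnu2
  · right
    have ha : a₁ ≠ 0 ∨ a₂ ≠ 0 := by
      rcases not_and_or.mp h12 with h | h
      · exact Or.inl h
      · exact Or.inr h
    have hkey : ∀ r ∈ I, r * deriv (deriv u) r = -2 * deriv u r * (1 + (deriv u r) ^ 2) ∧
        (a₃ ≠ 0 → deriv u r * u r = -r) :=
      fun r hr => key_stmt12 r (deriv u r) (deriv (deriv u) r) (u r) a₁ a₂ a₃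
        (hIpos hr) (hpos r hr) ha (hsms r hr)
    have ha3 : a₃ = 0 := by
      by_contra ha3
      obtain ⟨r₀, hr₀⟩ := hne
      have hr0 : 0 < r₀ := hIpos hr₀
      have hu0 : 0 < u r₀ := hpos r₀ hr₀
      have hdu : DifferentiableOn ℝ u I := hreg.differentiableOn (by norm_num)
      have hdu2 : ContDiffOn ℝ 1 (deriv u) I := hreg.deriv_of_isOpen hI (by norm_num)
      have H1 : HasDerivAt u (deriv u r₀) r₀ :=
        (hdu.differentiableAt (hI.mem_nhds hr₀)).hasDerivAt
      have H2 : HasDerivAt (deriv u) (deriv (deriv u) r₀) r₀ :=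
        ((hdu2.differentiableOn one_ne_zero).differentiableAt (hI.mem_nhds hr₀)).hasDerivAt
      have H3 : HasDerivAt (fun x => deriv u x * u x)
          (deriv (deriv u) r₀ * u r₀ + deriv u r₀ * deriv u r₀) r₀ := H2.mul H1
      have heq : (fun x => deriv u x * u x) =ᶠ[nhds r₀] (fun x => -x) := by
        filter_upwards [hI.mem_nhds hr₀] with x hx using (hkey x hx).2 ha3
      have H4 : HasDerivAt (fun x : ℝ => -x)
          (deriv (deriv u) r₀ * u r₀ + deriv u r₀ * deriv u r₀) r₀ :=
        H3.congr_of_eventuallyEq heq.symm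
      have H5 : HasDerivAt (fun x : ℝ => -x) (-1 : ℝ) r₀ := (hasDerivAt_id r₀).neg
      have hsum : deriv (deriv u) r₀ * u r₀ + deriv u r₀ * deriv u r₀ = -1 := H4.unique H5
      obtain ⟨e2, e1⟩ := hkey r₀ hr₀
      have e1' := e1 ha3
      have hwneg : deriv u r₀ < 0 := by nlinarith
      have hw2 : 0 < deriv (deriv u) r₀ := by nlinarith [sq_nonneg (deriv u r₀)]
      nlinarith [mul_pos hu0 hw2, sq_nonneg (deriv u r₀)]
    refine ⟨ha3, ?_⟩
    intro r hr
    have hrpos : 0 < r := hIpos hr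
    have hmain := (hkey r hr).1
    have h1 : (0:ℝ) < 1 + (deriv u r) ^ 2 := by positivity
    field_simp
    linear_combination hmain
end

section
/- Let u be a non-constant positive C² solution of u''/(1+u'²) = 2/u on an open interval. Then there exists a constant c ≠ 0 such that u'² = c²u⁴ − 1 throughout the interval. -/
/-- a non-constant positive C² solution of the 2-catenary equation
`u''·u = 2(1+u'²)` on an open interval satisfies the first integral
`u'² = c²u⁴ − 1` for some constant `c ≠ 0`. -/
theorem stmt16 (a b : ℝ) (hab : a < b) (u : ℝ → ℝ)
    (hreg : ContDiffOn ℝ 2 u (Set.Ioo a b))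
    (hpos : ∀ x ∈ Set.Ioo a b, 0 < u x)
    (hnc : ¬ ∀ x ∈ Set.Ioo a b, ∀ y ∈ Set.Ioo a b, u x = u y)
    (hode : ∀ x ∈ Set.Ioo a b, deriv (deriv u) x * u x = 2 * (1 + (deriv u x) ^ 2)) :
    ∃ c : ℝ, c ≠ 0 ∧ ∀ x ∈ Set.Ioo a b, (deriv u x) ^ 2 = c ^ 2 * (u x) ^ 4 - 1 := by
  set s := Set.Ioo a b with hs
  have hopen : IsOpen s := isOpen_Ioo
  have hconv : Convex ℝ s := convex_Ioo a b
  -- u differentiable on s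
  have hdu : DifferentiableOn ℝ u s := hreg.differentiableOn (by norm_num)
  have hd2 : ContDiffOn ℝ 1 (deriv u) s := hreg.deriv_of_isOpen hopen (by norm_num)
  have hddu : DifferentiableOn ℝ (deriv u) s := hd2.differentiableOn (by norm_num)
  have hU : ∀ x ∈ s, HasDerivAt u (deriv u x) x := fun x hx =>
    ((hdu x hx).differentiableAt (hopen.mem_nhds hx)).hasDerivAt
  have hU' : ∀ x ∈ s, HasDerivAt (deriv u) (deriv (deriv u) x) x := fun x hx =>
    ((hddu x hx).differentiableAt (hopen.mem_nhds hx)).hasDerivAt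
  -- the first integral g
  set g : ℝ → ℝ := fun x => (1 + (deriv u x) ^ 2) / (u x) ^ 4 with hg
  have hG : ∀ x ∈ s, HasDerivAt g 0 x := by
    intro x hx
    have hux := hpos x hx
    have h1 : HasDerivAt (fun y => 1 + (deriv u y) ^ 2)
        (2 * deriv u x * deriv (deriv u) x) x := by
      have := ((hU' x hx).fun_pow 2).const_add 1
      refine this.congr_deriv ?_
      ring
    have h2 : HasDerivAt (fun y => (u y) ^ 4) (4 * (u x) ^ 3 * deriv u x) x := by
      simpa using (hU x hx).fun_pow 4
    have h3 := h1.fun_div h2 (by positivity)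
    refine h3.congr_deriv (Eq.symm ?_)
    have hode' := hode x hx
    rw [eq_div_iff (by positivity)]
    linear_combination (-2) * deriv u x * u x ^ 3 * hode'
  have hGconst : ∀ x ∈ s, g x = g ((a+b)/2) := by
    intro x hx
    have hmid : (a+b)/2 ∈ s := ⟨by linarith, by linarith⟩
    have hdiff : DifferentiableOn ℝ g s := fun y hy => ((hG y hy).differentiableAt).differentiableWithinAt
    refine hconv.is_const_of_fderivWithin_eq_zero hdiff (fun y hy => ?_) hx hmid
    have h0 : fderiv ℝ g y = 0 := by
      have := (hG y hy).hasFDerivAt.fderiv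
      rw [this]
      ext t
      simp
    rw [fderivWithin_of_isOpen hopen hy, h0]
  set x₀ := (a+b)/2 with hx0
  have hmid : x₀ ∈ s := ⟨by linarith, by linarith⟩
  have hgpos : 0 < g x₀ := by
    have := hpos x₀ hmid
    have : (0:ℝ) < (u x₀)^4 := by positivity
    apply div_pos (by positivity) this
  refine ⟨Real.sqrt (g x₀), by positivity, fun x hx => ?_⟩
  have hc2 : Real.sqrt (g x₀) ^ 2 = g x₀ := Real.sq_sqrt hgpos.le
  rw [hc2]
  have hgx := hGconst x hx
  have hux := hpos x hx
  have h4 : (u x)^4 ≠ 0 := by positivity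
  have : (1 + (deriv u x) ^ 2) = g x₀ * (u x)^4 := by
    rw [← hgx, hg]
    field_simp
  linarith
end

section
/- The maximal interval of existence (−a, a) of the solution to u''/(1+u'²) = 2/u with u(0) = u₀ > 0, u'(0) = 0 is bounded, and u(x) → ∞ as x → a⁻. -/
open Filter MeasureTheory Set Topology

noncomputable def phi19 (u₀ q : ℝ) : ℝ := (u₀ / 2) * (1 + q ^ 2) ^ (-(3:ℝ)/4)

noncomputable def H19 (u₀ p : ℝ) : ℝ := ∫ q in (0:ℝ)..p, phi19 u₀ q

lemma one_add_sq_pos19 (q : ℝ) : 0 < 1 + q ^ 2 := by positivity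

lemma phi19_pos {u₀ : ℝ} (hu₀ : 0 < u₀) (q : ℝ) : 0 < phi19 u₀ q := by
  unfold phi19; positivity

lemma phi19_cont (u₀ : ℝ) : Continuous (phi19 u₀) := by
  apply continuous_const.mul
  exact (continuous_const.add (continuous_pow 2)).rpow_const
    (fun x => Or.inl (one_add_sq_pos19 x).ne')

lemma H19_hasDeriv (u₀ p : ℝ) : HasDerivAt (H19 u₀) (phi19 u₀ p) p :=
  intervalIntegral.integral_hasDerivAt_right ((phi19_cont u₀).intervalIntegrable _ _)
    ((phi19_cont u₀).stronglyMeasurable.stronglyMeasurableAtFilter)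
    (phi19_cont u₀).continuousAt

lemma H19_mono {u₀ : ℝ} (hu₀ : 0 < u₀) : StrictMono (H19 u₀) :=
  strictMono_of_deriv_pos fun p => by
    rw [(H19_hasDeriv u₀ p).deriv]; exact phi19_pos hu₀ p

lemma phi19_even (u₀ q : ℝ) : phi19 u₀ (-q) = phi19 u₀ q := by
  simp [phi19, neg_sq]

lemma H19_neg (u₀ p : ℝ) : H19 u₀ (-p) = - H19 u₀ p := by
  have h := intervalIntegral.integral_comp_neg (a := (0:ℝ)) (b := -p) (fun q => phi19 u₀ q)
  simp only [phi19_even, neg_neg, neg_zero] at h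
  rw [H19, h, intervalIntegral.integral_symm]
  rfl

lemma phi19_integrableOn {u₀ : ℝ} (hu₀ : 0 < u₀) : IntegrableOn (phi19 u₀) (Ioi (0:ℝ)) := by
  have h1 : IntegrableOn (phi19 u₀) (Ioc (0:ℝ) 1) := (phi19_cont u₀).integrableOn_Ioc
  have h2 : IntegrableOn (fun q : ℝ => (u₀/2) * q ^ (-(3:ℝ)/2)) (Ioi (1:ℝ)) :=
    (integrableOn_Ioi_rpow_of_lt (by norm_num) one_pos).const_mul _
  have h3 : IntegrableOn (phi19 u₀) (Ioi (1:ℝ)) := by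
    apply h2.mono' ((phi19_cont u₀).aestronglyMeasurable.restrict)
    filter_upwards [ae_restrict_mem measurableSet_Ioi] with q hq
    have hq1 : (1:ℝ) < q := hq
    have hq0 : (0:ℝ) < q := lt_trans one_pos hq1
    rw [Real.norm_eq_abs, abs_of_nonneg (phi19_pos hu₀ q).le]
    unfold phi19
    have hb : (1 + q ^ 2) ^ (-(3:ℝ)/4) ≤ (q ^ 2 : ℝ) ^ (-(3:ℝ)/4) := by
      apply Real.rpow_le_rpow_of_nonpos (by positivity) (by nlinarith) (by norm_num)
    have he : (q ^ 2 : ℝ) ^ (-(3:ℝ)/4) = q ^ (-(3:ℝ)/2) := by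
      rw [← Real.rpow_natCast q 2, ← Real.rpow_mul hq0.le]
      norm_num
    rw [← he]
    exact mul_le_mul_of_nonneg_left hb (by positivity)
  have := h1.union h3
  rwa [Set.Ioc_union_Ioi_eq_Ioi (zero_le_one)] at this

lemma H19_cont {u₀ : ℝ} : Continuous (H19 u₀) :=
  continuous_iff_continuousAt.2 fun p => (H19_hasDeriv u₀ p).continuousAt

lemma H19_zero {u₀ : ℝ} : H19 u₀ 0 = 0 := intervalIntegral.integral_same

lemma H19_le {u₀ : ℝ} (hu₀ : 0 < u₀) (p : ℝ) :
    H19 u₀ p ≤ ∫ q in Ioi (0:ℝ), phi19 u₀ q := by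
  rcases le_or_gt p 0 with hp | hp
  · calc H19 u₀ p ≤ H19 u₀ 0 := (H19_mono hu₀).monotone hp
      _ = 0 := H19_zero
      _ ≤ _ := setIntegral_nonneg measurableSet_Ioi fun q _ => (phi19_pos hu₀ q).le
  · rw [H19, intervalIntegral.integral_of_le hp.le]
    apply setIntegral_mono_set (phi19_integrableOn hu₀)
      (Eventually.of_forall fun q => (phi19_pos hu₀ q).le)
    exact HasSubset.Subset.eventuallyLE Ioc_subset_Ioi_self

lemma H19_lt {u₀ : ℝ} (hu₀ : 0 < u₀) (p : ℝ) :
    H19 u₀ p < ∫ q in Ioi (0:ℝ), phi19 u₀ q :=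
  lt_of_lt_of_le (H19_mono hu₀ (lt_add_one p)) (H19_le hu₀ _)

lemma H19_gt {u₀ : ℝ} (hu₀ : 0 < u₀) (p : ℝ) :
    -(∫ q in Ioi (0:ℝ), phi19 u₀ q) < H19 u₀ p := by
  have := H19_lt hu₀ (-p)
  rw [H19_neg] at this
  linarith

lemma a19_pos {u₀ : ℝ} (hu₀ : 0 < u₀) : 0 < ∫ q in Ioi (0:ℝ), phi19 u₀ q := by
  have h := H19_lt hu₀ 0
  rwa [H19_zero] at h

lemma H19_tendsto {u₀ : ℝ} (hu₀ : 0 < u₀) :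
    Tendsto (H19 u₀) atTop (𝓝 (∫ q in Ioi (0:ℝ), phi19 u₀ q)) :=
  intervalIntegral_tendsto_integral_Ioi 0 (phi19_integrableOn hu₀) tendsto_id

lemma H19_surj {u₀ : ℝ} (hu₀ : 0 < u₀) :
    Ioo (-(∫ q in Ioi (0:ℝ), phi19 u₀ q)) (∫ q in Ioi (0:ℝ), phi19 u₀ q)
      ⊆ Set.range (H19 u₀) := by
  intro x hx
  obtain ⟨P, hP⟩ := ((H19_tendsto hu₀).eventually (eventually_gt_nhds hx.2)).exists
  obtain ⟨Q, hQ⟩ := ((H19_tendsto hu₀).eventually (eventually_gt_nhds (by linarith [hx.1] :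
    -x < ∫ q in Ioi (0:ℝ), phi19 u₀ q))).exists
  have hQ' : H19 u₀ (-Q) < x := by rw [H19_neg]; linarith
  have hQP : -Q ≤ P := ((H19_mono hu₀).lt_iff_lt.1 (hQ'.trans hP)).le
  have := intermediate_value_Icc hQP (H19_cont (u₀ := u₀)).continuousOn
  exact Set.image_subset_range _ _ (this ⟨hQ'.le, hP.le⟩)

lemma phi19_inv {u₀ : ℝ} (hu₀ : 0 < u₀) (t : ℝ) :
    (phi19 u₀ t)⁻¹ = (2/u₀) * (1 + t ^ 2) ^ ((3:ℝ)/4) := by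
  unfold phi19
  rw [show (-(3:ℝ)/4) = -((3:ℝ)/4) by norm_num,
    Real.rpow_neg (one_add_sq_pos19 t).le, mul_inv, inv_inv, inv_div]

lemma E19calc {u₀ : ℝ} (hu₀ : 0 < u₀) (t : ℝ) :
    ((2/u₀) * (1 + t ^ 2) ^ ((3:ℝ)/4)) * (u₀ * (1 + t ^ 2) ^ ((1:ℝ)/4)) = 2 * (1 + t ^ 2) := by
  have h : (1 + t ^ 2) ^ ((3:ℝ)/4) * (1 + t ^ 2) ^ ((1:ℝ)/4) = 1 + t ^ 2 := by
    rw [← Real.rpow_add (one_add_sq_pos19 t)]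
    norm_num
  calc ((2/u₀) * (1 + t ^ 2) ^ ((3:ℝ)/4)) * (u₀ * (1 + t ^ 2) ^ ((1:ℝ)/4))
      = (2/u₀ * u₀) * ((1 + t ^ 2) ^ ((3:ℝ)/4) * (1 + t ^ 2) ^ ((1:ℝ)/4)) := by ring
    _ = 2 * (1 + t ^ 2) := by rw [h, div_mul_cancel₀ _ hu₀.ne']

lemma F19contDiff {u₀ : ℝ} (e : ℝ) : ContDiff ℝ 2 (fun t : ℝ => u₀ * (1 + t ^ 2) ^ e) := by
  apply contDiff_const.mul
  apply contDiff_iff_contDiffAt.2 fun t => ?_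
  exact ((contDiff_const.add (contDiff_id.pow 2)).contDiffAt).rpow_const_of_ne
    (one_add_sq_pos19 t).ne'

lemma F19tendsto {u₀ : ℝ} (hu₀ : 0 < u₀) :
    Tendsto (fun t : ℝ => u₀ * (1 + t ^ 2) ^ ((1:ℝ)/4)) atTop atTop := by
  apply Tendsto.const_mul_atTop hu₀
  apply (tendsto_rpow_atTop (by norm_num : (0:ℝ) < 1/4)).comp
  exact tendsto_atTop_add_const_left _ 1 (tendsto_pow_atTop two_ne_zero)

/-- the maximal interval of existence `(−a,a)` of the solution of the
2-catenary equation `u''/(1+u'²) = 2/u` with `u(0) = u₀ > 0`, `u'(0) = 0`, is bounded,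
and `u(x) → ∞` as `x → a⁻`. -/
theorem stmt19 (u₀ : ℝ) (hu₀ : 0 < u₀) :
    ∃ a : ℝ, 0 < a ∧ ∃ u : ℝ → ℝ,
      ContDiffOn ℝ 2 u (Set.Ioo (-a) a) ∧
      (∀ x ∈ Set.Ioo (-a) a, 0 < u x ∧
        deriv (deriv u) x * u x = 2 * (1 + (deriv u x) ^ 2)) ∧
      u 0 = u₀ ∧ deriv u 0 = 0 ∧
      Tendsto u (nhdsWithin a (Set.Iio a)) atTop := by
  set a := ∫ q in Ioi (0:ℝ), phi19 u₀ q with ha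
  have hapos : 0 < a := a19_pos hu₀
  set p : ℝ → ℝ := Function.invFun (H19 u₀) with hp
  have hinj := (H19_mono hu₀).injective
  have hli : Function.LeftInverse p (H19 u₀) := Function.leftInverse_invFun hinj
  have hs : IsOpen (Set.Ioo (-a) a) := isOpen_Ioo
  have hHP : ∀ x ∈ Set.Ioo (-a) a, H19 u₀ (p x) = x := fun x hx =>
    Function.invFun_eq (H19_surj hu₀ hx)
  have hcontp : ∀ x ∈ Set.Ioo (-a) a, ContinuousAt p x := by
    intro x hx
    rw [ContinuousAt, tendsto_order]
    constructor
    · intro b hb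
      have h1 : H19 u₀ b < x := by rw [← hHP x hx]; exact H19_mono hu₀ hb
      filter_upwards [hs.mem_nhds hx, eventually_gt_nhds h1] with y hy1 hy2
      have : H19 u₀ b < H19 u₀ (p y) := by rwa [hHP y hy1]
      exact (H19_mono hu₀).lt_iff_lt.1 this
    · intro b hb
      have h1 : x < H19 u₀ b := by rw [← hHP x hx]; exact H19_mono hu₀ hb
      filter_upwards [hs.mem_nhds hx, eventually_lt_nhds h1] with y hy1 hy2
      have : H19 u₀ (p y) < H19 u₀ b := by rwa [hHP y hy1]
      exact (H19_mono hu₀).lt_iff_lt.1 this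
  have hpd : ∀ x ∈ Set.Ioo (-a) a,
      HasDerivAt p ((2/u₀) * (1 + (p x) ^ 2) ^ ((3:ℝ)/4)) x := by
    intro x hx
    have := HasDerivAt.of_local_left_inverse (hcontp x hx) (H19_hasDeriv u₀ (p x))
      (phi19_pos hu₀ (p x)).ne'
      (by filter_upwards [hs.mem_nhds hx] with y hy; exact hHP y hy)
    rwa [phi19_inv hu₀] at this
  set u : ℝ → ℝ := fun x => u₀ * (1 + (p x) ^ 2) ^ ((1:ℝ)/4) with hu
  have hud' : ∀ x ∈ Set.Ioo (-a) a, HasDerivAt u (p x) x := by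
    intro x hx
    have h1 := ((hpd x hx).pow 2).const_add 1
    have h2 := h1.rpow_const (p := (1:ℝ)/4) (Or.inl (one_add_sq_pos19 (p x)).ne')
    have h3 := h2.const_mul u₀
    convert h3 using 1
    case e'_4 => rfl
    case e'_5 => rfl
    case e'_8 => rfl
    have hz := one_add_sq_pos19 (p x)
    have hmul : (1 + p x ^ 2) ^ ((3:ℝ)/4) * (1 + p x ^ 2) ^ ((1:ℝ)/4 - 1) = 1 := by
      rw [← Real.rpow_add hz]; norm_num
    have h2u : u₀ * (2/u₀) = 2 := by field_simp
    push_cast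
    calc p x = ((1 + p x ^ 2) ^ ((3:ℝ)/4) * (1 + p x ^ 2) ^ ((1:ℝ)/4 - 1)) *
        ((u₀ * (2/u₀)) * ((1/2) * p x)) := by rw [hmul, h2u]; ring
      _ = u₀ * (2 * p x ^ (2 - 1) * (2 / u₀ * (1 + p x ^ 2) ^ ((3:ℝ)/4)) * (1 / 4) *
        (1 + p x ^ 2) ^ ((1:ℝ)/4 - 1)) := by ring
  have hEq : Set.EqOn (deriv u) p (Set.Ioo (-a) a) := fun x hx => (hud' x hx).deriv
  have h0mem : (0:ℝ) ∈ Set.Ioo (-a) a := ⟨neg_lt_zero.2 hapos, hapos⟩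
  have hp0 : p 0 = 0 := by have h := hli 0; rwa [H19_zero] at h
  have hderiv2 : ∀ x ∈ Set.Ioo (-a) a,
      deriv (deriv u) x = (2/u₀) * (1 + (p x) ^ 2) ^ ((3:ℝ)/4) := by
    intro x hx
    have hev : deriv u =ᶠ[𝓝 x] p := by
      filter_upwards [hs.mem_nhds hx] with y hy; exact hEq hy
    rw [hev.deriv_eq]
    exact (hpd x hx).deriv
  have hdiffp : DifferentiableOn ℝ p (Set.Ioo (-a) a) := fun x hx =>
    (hpd x hx).differentiableAt.differentiableWithinAt
  have hEqp : Set.EqOn (deriv p) (fun t => (2/u₀) * (1 + (p t) ^ 2) ^ ((3:ℝ)/4))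
      (Set.Ioo (-a) a) := fun x hx => (hpd x hx).deriv
  have hψ : ContDiff ℝ 2 (fun t : ℝ => (2/u₀) * (1 + t ^ 2) ^ ((3:ℝ)/4)) := F19contDiff _
  have hp1 : ContDiffOn ℝ 1 p (Set.Ioo (-a) a) := by
    rw [show (1 : WithTop ℕ∞) = 0 + 1 from rfl, contDiffOn_succ_iff_deriv_of_isOpen hs]
    refine ⟨hdiffp, by simp, ?_⟩
    rw [contDiffOn_zero]
    exact (hψ.continuous.comp_continuousOn hdiffp.continuousOn).congr hEqp
  have hp2 : ContDiffOn ℝ 2 p (Set.Ioo (-a) a) := by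
    rw [show (2 : WithTop ℕ∞) = 1 + 1 from rfl, contDiffOn_succ_iff_deriv_of_isOpen hs]
    refine ⟨hdiffp, by simp, ?_⟩
    exact ((hψ.of_le (by norm_num)).comp_contDiffOn hp1).congr hEqp
  refine ⟨a, hapos, u, ?_, ?_, ?_, ?_, ?_⟩
  · exact (F19contDiff ((1:ℝ)/4)).comp_contDiffOn hp2
  · intro x hx
    refine ⟨mul_pos hu₀ (Real.rpow_pos_of_pos (one_add_sq_pos19 (p x)) _), ?_⟩
    rw [hderiv2 x hx, hEq hx]
    exact E19calc hu₀ (p x)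
  · show u₀ * (1 + (p 0) ^ 2) ^ ((1:ℝ)/4) = u₀
    rw [hp0]
    norm_num
  · rw [hEq h0mem, hp0]
  · have hptop : Tendsto p (𝓝[<] a) atTop := by
      rw [tendsto_atTop]
      intro M
      have hMa : H19 u₀ M < a := H19_lt hu₀ M
      have hMg : -a < H19 u₀ M := H19_gt hu₀ M
      filter_upwards [Ioo_mem_nhdsLT_of_mem
        (show a ∈ Set.Ioc (H19 u₀ M) a from ⟨hMa, le_refl a⟩)] with x hx
      have hx' : x ∈ Set.Ioo (-a) a := ⟨lt_trans hMg hx.1, hx.2⟩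
      have : H19 u₀ M < H19 u₀ (p x) := by rw [hHP x hx']; exact hx.1
      exact ((H19_mono hu₀).lt_iff_lt.1 this).le
    exact (F19tendsto hu₀).comp hptop
end
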